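/- Let A be an n×n real symmetric matrix with rank(A) ≥ n−1, and let B = [[A, α],[αᵀ, b]] be an (n+1)×(n+1) real symmetric matrix such that det(A) and det(B) are not both zero. If det(A)·det(B) < 0 then q(B) = q(A) + 1, where q denotes the negative index of inertia. -/

import Mathlib

open Matrix

/-- The negative index of inertia of a real symmetric matrix: the number of
negative eigenvalues counted with multiplicity. -/
noncomputable def negInertia {n : ℕ} (M : Matrix (Fin n) (Fin n) ℝ) : ℕ :=
  if h : M.IsHermitian then (Finset.univ.filter fun i => h.eigenvalues i < 0).card
  else 0

open Module Finset

section Helpers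

variable {m : ℕ}

/-- quadratic form of a matrix -/
noncomputable abbrev qfm {m : ℕ} (M : Matrix (Fin m) (Fin m) ℝ) (x : Fin m → ℝ) : ℝ :=
  x ⬝ᵥ M *ᵥ x

/-- extension by zero -/
def extZero (P : Fin m → Prop) [DecidablePred P] :
    ({i : Fin m // P i} → ℝ) →ₗ[ℝ] (Fin m → ℝ) where
  toFun x i := if h : P i then x ⟨i, h⟩ else 0
  map_add' x y := by funext i; by_cases h : P i <;> simp [h]
  map_smul' c x := by funext i; by_cases h : P i <;> simp [h]

lemma extZero_inj (P : Fin m → Prop) [DecidablePred P] : Function.Injective (extZero P) := by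
  intro x y hxy
  funext i
  have := congrFun hxy i.1
  simpa [extZero, i.2] using this

lemma finrank_range_extZero (P : Fin m → Prop) [DecidablePred P] :
    finrank ℝ (LinearMap.range (extZero P)) = (Finset.univ.filter P).card := by
  rw [LinearMap.finrank_range_of_inj (extZero_inj P), Module.finrank_fintype_fun_eq_card,
    Fintype.card_subtype]

lemma mem_range_extZero {P : Fin m → Prop} [DecidablePred P] {x : Fin m → ℝ}
    (hx : x ∈ LinearMap.range (extZero P)) {i : Fin m} (hi : ¬ P i) : x i = 0 := by
  obtain ⟨y, rfl⟩ := hx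
  simp [extZero, hi]

end Helpers

section Spectral

variable {m : ℕ} {M : Matrix (Fin m) (Fin m) ℝ}

lemma qfm_eigen (hM : M.IsHermitian) (x : Fin m → ℝ) :
    qfm M x = ∑ i, hM.eigenvalues i *
      ((star (hM.eigenvectorUnitary : Matrix (Fin m) (Fin m) ℝ) *ᵥ x) i) ^ 2 := by
  set U : Matrix (Fin m) (Fin m) ℝ := (hM.eigenvectorUnitary : Matrix (Fin m) (Fin m) ℝ)
  have hdiag : diagonal (RCLike.ofReal ∘ hM.eigenvalues) = diagonal hM.eigenvalues := by
    congr 1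
  have hspec := hM.spectral_theorem
  rw [hdiag] at hspec
  have hstar : star U = Uᵀ := by
    ext i j; simp [Matrix.star_eq_conjTranspose, Matrix.conjTranspose_apply]
  calc qfm M x = x ⬝ᵥ (U * diagonal hM.eigenvalues * star U) *ᵥ x := by rw [qfm]; exact congrArg (fun N => x ⬝ᵥ N *ᵥ x) hspec
    _ = (star U *ᵥ x) ⬝ᵥ diagonal hM.eigenvalues *ᵥ (star U *ᵥ x) := by
        rw [← Matrix.mulVec_mulVec, ← Matrix.mulVec_mulVec, Matrix.dotProduct_mulVec x U,
          hstar, ← Matrix.mulVec_transpose, Matrix.dotProduct_mulVec]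
    _ = ∑ i, hM.eigenvalues i * ((star U *ᵥ x) i) ^ 2 := by
        simp only [dotProduct, mulVec_diagonal]
        exact Finset.sum_congr rfl fun i _ => by ring

/-- The linear equivalence `x ↦ star U *ᵥ x`. -/
noncomputable def unitaryEquiv (hM : M.IsHermitian) : (Fin m → ℝ) ≃ₗ[ℝ] (Fin m → ℝ) :=
  LinearEquiv.ofLinear
    (Matrix.mulVecLin (star (hM.eigenvectorUnitary : Matrix (Fin m) (Fin m) ℝ)))
    (Matrix.mulVecLin (hM.eigenvectorUnitary : Matrix (Fin m) (Fin m) ℝ))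
    (by rw [← Matrix.mulVecLin_mul, Matrix.mem_unitaryGroup_iff'.mp hM.eigenvectorUnitary.2,
        Matrix.mulVecLin_one])
    (by rw [← Matrix.mulVecLin_mul, Matrix.mem_unitaryGroup_iff.mp hM.eigenvectorUnitary.2,
        Matrix.mulVecLin_one])

lemma exists_subspaces (hM : M.IsHermitian) :
    ∃ Wneg Wnn : Submodule ℝ (Fin m → ℝ),
      finrank ℝ Wneg = negInertia M ∧ (∀ x ∈ Wneg, x ≠ 0 → qfm M x < 0) ∧
      finrank ℝ Wnn = m - negInertia M ∧ (∀ x ∈ Wnn, 0 ≤ qfm M x) := by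
  classical
  set μ := hM.eigenvalues
  set e := unitaryEquiv hM
  have he : ∀ x, qfm M x = ∑ i, μ i * (e x i) ^ 2 := fun x => qfm_eigen hM x
  have hq : negInertia M = (Finset.univ.filter fun i => μ i < 0).card := by
    rw [negInertia, dif_pos hM]
  refine ⟨(LinearMap.range (extZero (fun i => μ i < 0))).comap e.toLinearMap,
    (LinearMap.range (extZero (fun i => 0 ≤ μ i))).comap e.toLinearMap, ?_, ?_, ?_, ?_⟩
  · rw [Submodule.comap_equiv_eq_map_symm, LinearEquiv.finrank_map_eq,
      finrank_range_extZero, hq]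
  · intro x hx hx0
    rw [Submodule.mem_comap] at hx
    have hex : e x ≠ 0 := fun h => hx0 (by simpa using congrArg e.symm h)
    rw [he]
    obtain ⟨j, hj⟩ : ∃ j, e x j ≠ 0 := by
      by_contra h
      push_neg at h
      exact hex (funext h)
    have hj' : μ j < 0 := by
      by_contra h
      exact hj (mem_range_extZero hx h)
    have : ∑ i, μ i * (e x i) ^ 2 < ∑ i : Fin m, (0 : ℝ) := by
      refine Finset.sum_lt_sum (fun i _ => ?_) ⟨j, Finset.mem_univ j, ?_⟩
      · by_cases h : μ i < 0
        · nlinarith [sq_nonneg (e x i)]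
        · have h0 : e x i = 0 := mem_range_extZero hx h
          rw [h0]; simp
      · have : (0:ℝ) < (e x j) ^ 2 := by positivity
        nlinarith
    simpa using this
  · rw [Submodule.comap_equiv_eq_map_symm, LinearEquiv.finrank_map_eq,
      finrank_range_extZero, hq]
    have := Finset.card_filter_add_card_filter_not (s := (Finset.univ : Finset (Fin m)))
      (p := fun i => μ i < 0)
    simp only [not_lt, Finset.card_univ, Fintype.card_fin] at this
    omega
  · intro x hx
    rw [Submodule.mem_comap] at hx
    rw [he]
    refine Finset.sum_nonneg fun i _ => ?_
    by_cases h : 0 ≤ μ i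
    · positivity
    · have h0 : e x i = 0 := mem_range_extZero hx h
      rw [h0]; simp

end Spectral

section Char

variable {m : ℕ} {M : Matrix (Fin m) (Fin m) ℝ}

lemma disjoint_finrank {W1 W2 : Submodule ℝ (Fin m → ℝ)}
    (h1 : ∀ x ∈ W1, x ≠ 0 → qfm M x < 0) (h2 : ∀ x ∈ W2, 0 ≤ qfm M x) :
    finrank ℝ W1 + finrank ℝ W2 ≤ m := by
  have hinf : W1 ⊓ W2 = ⊥ := by
    rw [Submodule.eq_bot_iff]
    intro x hx
    by_contra hx0
    exact absurd (h2 x hx.2) (not_le.mpr (h1 x hx.1 hx0))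
  have := Submodule.finrank_sup_add_finrank_inf_eq W1 W2
  rw [hinf] at this
  simp only [finrank_bot, add_zero] at this
  have hle : finrank ℝ ↥(W1 ⊔ W2) ≤ finrank ℝ (Fin m → ℝ) := Submodule.finrank_le _
  rw [Module.finrank_fintype_fun_eq_card, Fintype.card_fin] at hle
  omega

lemma negInertia_le (hM : M.IsHermitian) : negInertia M ≤ m := by
  rw [negInertia, dif_pos hM]
  exact le_trans (Finset.card_filter_le _ _) (by simp)

lemma negInertia_eq_of (hM : M.IsHermitian) (k : ℕ)
    (W1 : Submodule ℝ (Fin m → ℝ)) (hd1 : finrank ℝ W1 = k)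
    (hn1 : ∀ x ∈ W1, x ≠ 0 → qfm M x < 0)
    (W2 : Submodule ℝ (Fin m → ℝ)) (hd2 : finrank ℝ W2 = m - k) (hk : k ≤ m)
    (hn2 : ∀ x ∈ W2, 0 ≤ qfm M x) :
    negInertia M = k := by
  obtain ⟨Wneg, Wnn, hWd, hWneg, hWnnd, hWnn⟩ := exists_subspaces hM
  have hq := negInertia_le hM
  have h1 : k + (m - negInertia M) ≤ m := by
    have := disjoint_finrank hn1 hWnn; omega
  have h2 : negInertia M + (m - k) ≤ m := by
    have := disjoint_finrank hWneg hn2; omega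
  omega

/-- finrank of product submodule -/
lemma finrank_prod_sub {N P : Type*} [AddCommGroup N] [Module ℝ N] [AddCommGroup P] [Module ℝ P]
    (p : Submodule ℝ N) (q : Submodule ℝ P) [FiniteDimensional ℝ p] [FiniteDimensional ℝ q] :
    finrank ℝ (p.prod q) = finrank ℝ p + finrank ℝ q := by
  have e : ↥(p.prod q) ≃ₗ[ℝ] p × q :=
    { toFun := fun x => (⟨x.1.1, x.2.1⟩, ⟨x.1.2, x.2.2⟩)
      invFun := fun y => ⟨(y.1.1, y.2.1), ⟨y.1.2, y.2.2⟩⟩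
      map_add' := fun x y => rfl
      map_smul' := fun c x => rfl
      left_inv := fun x => rfl
      right_inv := fun y => rfl }
  rw [LinearEquiv.finrank_eq e, Module.finrank_prod]

end Char

theorem stmt1 {n : ℕ} (A : Matrix (Fin n) (Fin n) ℝ) (hA : A.IsSymm)
    (hrank : n - 1 ≤ A.rank)
    (α : Fin n → ℝ) (b : ℝ) (B : Matrix (Fin (n + 1)) (Fin (n + 1)) ℝ)
    (hB1 : ∀ i j : Fin n, B i.castSucc j.castSucc = A i j)
    (hB2 : ∀ i : Fin n, B i.castSucc (Fin.last n) = α i)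
    (hB3 : ∀ i : Fin n, B (Fin.last n) i.castSucc = α i)
    (hB4 : B (Fin.last n) (Fin.last n) = b)
    (hdet : ¬(A.det = 0 ∧ B.det = 0))
    (hneg : A.det * B.det < 0) :
    negInertia B = negInertia A + 1 := by
  classical
  have hA' : A.IsHermitian := by
    rw [Matrix.IsHermitian]
    ext i j
    rw [Matrix.conjTranspose_apply, star_trivial]
    exact congrFun (congrFun hA i) j
  have hB' : B.IsHermitian := by
    rw [Matrix.IsHermitian]
    ext i j
    rw [Matrix.conjTranspose_apply, star_trivial]
    refine Fin.lastCases ?_ (fun i' => ?_) i <;> refine Fin.lastCases ?_ (fun j' => ?_) j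
    · rfl
    · rw [hB2, hB3]
    · rw [hB2, hB3]
    · rw [hB1, hB1]
      exact congrFun (congrFun hA i') j'
  have hdA : A.det ≠ 0 := fun h => by simp [h] at hneg
  have hdB : B.det ≠ 0 := fun h => by simp [h] at hneg
  have : Invertible A := A.invertibleOfIsUnitDet (isUnit_iff_ne_zero.mpr hdA)
  set c : Fin n → ℝ := A⁻¹ *ᵥ α with hc
  have hAc : A *ᵥ c = α := by
    rw [hc, Matrix.mulVec_mulVec, Matrix.mul_nonsing_inv _ (isUnit_iff_ne_zero.mpr hdA),
      Matrix.one_mulVec]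
  set s : ℝ := b - α ⬝ᵥ c with hs_def
  -- block matrix representation
  set Ab : Matrix (Fin n) (Fin 1) ℝ := Matrix.of (fun i _ => α i) with hAb
  set Ac : Matrix (Fin 1) (Fin n) ℝ := Matrix.of (fun _ j => α j) with hAc'
  set Ad : Matrix (Fin 1) (Fin 1) ℝ := Matrix.of (fun _ _ => b) with hAd
  set C : Matrix (Fin n ⊕ Fin 1) (Fin n ⊕ Fin 1) ℝ := fromBlocks A Ab Ac Ad with hC
  have hcs : ∀ i : Fin n, finSumFinEquiv.symm i.castSucc = Sum.inl i := fun i =>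
    finSumFinEquiv_symm_apply_castAdd i
  have hBeq : B = C.submatrix finSumFinEquiv.symm finSumFinEquiv.symm := by
    ext i j
    refine Fin.lastCases ?_ (fun i' => ?_) i <;> refine Fin.lastCases ?_ (fun j' => ?_) j <;>
      simp [hC, hAb, hAc', hAd, hcs, hB1, hB2, hB3, hB4, Matrix.submatrix_apply]
  -- determinant identity
  have hdetBC : B.det = C.det := by
    rw [hBeq, Matrix.det_submatrix_equiv_self]
  have hCdet : C.det = A.det * s := by
    rw [hC, Matrix.det_fromBlocks₁₁, Matrix.invOf_eq_nonsing_inv]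
    congr 1
    rw [Matrix.det_fin_one]
    simp only [Matrix.sub_apply, hAd, Matrix.of_apply, hs_def]
    congr 1
    rw [hc]
    simp only [Matrix.mul_apply, hAc', hAb, Matrix.of_apply, dotProduct, Matrix.mulVec,
      dotProduct, Finset.sum_mul, Finset.mul_sum]
    rw [Finset.sum_comm]
    exact Finset.sum_congr rfl fun i _ => Finset.sum_congr rfl fun j _ => by ring
  have hs : s < 0 := by
    rw [hdetBC, hCdet] at hneg
    nlinarith [sq_nonneg A.det]
  -- quadratic form identity
  have hsnoc : ∀ (x : Fin n → ℝ) (t : ℝ),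
      (Fin.snoc x t : Fin (n+1) → ℝ) = (Sum.elim x (fun _ => t)) ∘ finSumFinEquiv.symm := by
    intro x t
    funext k
    refine Fin.lastCases ?_ (fun k' => ?_) k <;> simp [hcs]
  have hqfB : ∀ (x : Fin n → ℝ) (t : ℝ),
      qfm B (Fin.snoc x t) = qfm A x + 2 * (t * (α ⬝ᵥ x)) + b * t ^ 2 := by
    intro x t
    set w : Fin n ⊕ Fin 1 → ℝ := Sum.elim x (fun _ => t) with hw
    have h1 : qfm B (Fin.snoc x t) = w ⬝ᵥ C *ᵥ w := by
      rw [qfm, hBeq, hsnoc, ← hw, Matrix.submatrix_mulVec_equiv]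
      have : (w ∘ ⇑finSumFinEquiv.symm) ∘ ⇑finSumFinEquiv.symm.symm = w := by
        funext k; simp
      rw [this]
      exact Fintype.sum_equiv finSumFinEquiv.symm _ _ fun k => rfl
    rw [h1, hC, hw, Matrix.fromBlocks_mulVec, sumElim_dotProduct_sumElim]
    simp only [Sum.elim_comp_inl, Sum.elim_comp_inr]
    have hAbv : Ab *ᵥ (fun _ => t) = fun i => α i * t := by
      funext i; simp [hAb, Matrix.mulVec, dotProduct]
    have hAcv : Ac *ᵥ x = fun _ => α ⬝ᵥ x := by
      funext i; simp [hAc', Matrix.mulVec, dotProduct]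
    have hAdv : Ad *ᵥ (fun _ => t) = fun _ => b * t := by
      funext i; simp [hAd, Matrix.mulVec, dotProduct]
    rw [hAbv, hAcv, hAdv, dotProduct_add, dotProduct_add]
    have h2 : (x ⬝ᵥ fun i => α i * t) = t * (α ⬝ᵥ x) := by
      simp only [dotProduct, Finset.mul_sum]
      exact Finset.sum_congr rfl fun i _ => by ring
    have h3 : ((fun _ : Fin 1 => t) ⬝ᵥ fun _ => α ⬝ᵥ x) = t * (α ⬝ᵥ x) := by
      simp [dotProduct]
    have h4 : ((fun _ : Fin 1 => t) ⬝ᵥ fun _ => b * t) = b * t ^ 2 := by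
      simp [dotProduct]; ring
    rw [h2, h3, h4, qfm]
    ring
  -- completion of square
  have hkey : ∀ (z : Fin n → ℝ) (t : ℝ),
      qfm B (Fin.snoc (z - t • c) t) = qfm A z + s * t ^ 2 := by
    intro z t
    rw [hqfB]
    have e1 : qfm A (z - t • c) = qfm A z - 2 * (t * (α ⬝ᵥ z)) + t ^ 2 * (α ⬝ᵥ c) := by
      have hsym : ∀ u v : Fin n → ℝ, u ⬝ᵥ A *ᵥ v = v ⬝ᵥ A *ᵥ u := by
        intro u v
        rw [Matrix.dotProduct_mulVec, ← Matrix.mulVec_transpose, hA.eq,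
          dotProduct_comm]
      have hca : c ⬝ᵥ A *ᵥ c = α ⬝ᵥ c := by
        rw [hAc, dotProduct_comm]
      have hza : z ⬝ᵥ A *ᵥ c = α ⬝ᵥ z := by
        rw [hAc, dotProduct_comm]
      rw [qfm, Matrix.mulVec_sub, sub_dotProduct, dotProduct_sub,
        dotProduct_sub, Matrix.mulVec_smul, dotProduct_smul,
        smul_dotProduct, smul_dotProduct, dotProduct_smul,
        hsym c z]
      rw [qfm]
      simp only [smul_eq_mul]
      rw [hza, hca]
      ring
    have e2 : α ⬝ᵥ (z - t • c) = α ⬝ᵥ z - t * (α ⬝ᵥ c) := by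
      rw [dotProduct_sub, dotProduct_smul, smul_eq_mul]
    rw [e1, e2, hs_def]
    ring
  -- the linear equivalence T
  set T : ((Fin n → ℝ) × ℝ) ≃ₗ[ℝ] (Fin (n+1) → ℝ) :=
    { toFun := fun p => Fin.snoc (p.1 - p.2 • c) p.2
      invFun := fun y => (Fin.init y + (y (Fin.last n)) • c, y (Fin.last n))
      map_add' := by
        intro p q
        funext k
        refine Fin.lastCases ?_ (fun k' => ?_) k <;>
          simp [Fin.snoc_last, Fin.snoc_castSucc, add_smul] <;> ring
      map_smul' := by
        intro r p
        funext k
        refine Fin.lastCases ?_ (fun k' => ?_) k <;>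
          simp [Fin.snoc_last, Fin.snoc_castSucc, smul_smul, mul_sub, mul_assoc]
      left_inv := by
        intro p
        simp [Fin.init_snoc, Fin.snoc_last]
      right_inv := by
        intro y
        simp only [Fin.snoc_last, add_sub_cancel_right]
        exact Fin.snoc_init_self y } with hT
  -- obtain subspaces for A
  obtain ⟨WnegA, WnnA, hWd, hWneg, hWnnd, hWnn⟩ := exists_subspaces hA'
  have hqA : negInertia A ≤ n := negInertia_le hA'
  refine negInertia_eq_of hB' (negInertia A + 1)
    ((WnegA.prod (⊤ : Submodule ℝ ℝ)).map T.toLinearMap) ?_ ?_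
    ((WnnA.prod (⊥ : Submodule ℝ ℝ)).map T.toLinearMap) ?_ (by omega) ?_
  · rw [LinearEquiv.finrank_map_eq, finrank_prod_sub, hWd, finrank_top, finrank_self]
  · rintro y ⟨⟨z, t⟩, ⟨hz, -⟩, rfl⟩ hy0
    have hzt : ¬(z = 0 ∧ t = 0) := by
      rintro ⟨rfl, rfl⟩
      apply hy0
      rw [show ((0 : Fin n → ℝ), (0 : ℝ)) = (0 : (Fin n → ℝ) × ℝ) from rfl]
      exact map_zero _
    have := hkey z t
    show qfm B (Fin.snoc (z - t • c) t) < 0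
    rw [this]
    by_cases hz0 : z = 0
    · have ht : t ≠ 0 := fun h => hzt ⟨hz0, h⟩
      have : qfm A z = 0 := by rw [hz0]; simp [qfm]
      rw [this]
      have : s * t ^ 2 < 0 := mul_neg_of_neg_of_pos hs (by positivity)
      linarith
    · have h1 : qfm A z < 0 := hWneg z hz hz0
      have h2 : s * t ^ 2 ≤ 0 := mul_nonpos_of_nonpos_of_nonneg (le_of_lt hs) (sq_nonneg t)
      linarith
  · rw [LinearEquiv.finrank_map_eq, finrank_prod_sub, hWnnd, finrank_bot]
    omega
  · rintro y ⟨⟨z, t⟩, ⟨hz, ht⟩, rfl⟩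
    have ht0 : t = 0 := by simpa using ht
    show 0 ≤ qfm B (Fin.snoc (z - t • c) t)
    rw [hkey z t, ht0]
    have := hWnn z hz
    nlinarith [this]
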